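/- Let λ ∈ P(R). Then there exists an element w ∈ W such that w(λ) is dominant and w is λ-minuscule if and only if ⟨λ, α∨⟩ ≥ −1 for all positive roots α of R. -/

import Mathlib

/-!
Common setup: an abstract reduced irreducible crystallographic root system `R`
inside a real inner product space `E`, with simple roots `α i` (`i : ι`) forming
a basis of `E`, Weyl group generated by the reflections in the roots
(equivalently, by the simple reflections), coroot pairing
`⟨x, a∨⟩ = 2 (x, a) / (a, a)`, weight lattice `P(R)`, root lattices `Q(R)`,
`Q(R_J)`, etc.
-/

open scoped BigOperators

noncomputable section

/-- the pairing `⟨x, a∨⟩ = 2 (x, a)/(a, a)` of `x` with the coroot of `a`. -/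
def pairR {E : Type} [NormedAddCommGroup E] [InnerProductSpace ℝ E] (x a : E) : ℝ :=
  2 * (inner ℝ x a : ℝ) / (inner ℝ a a : ℝ)

/-- the reflection in (the hyperplane orthogonal to) `a`. -/
def reflFun {E : Type} [NormedAddCommGroup E] [InnerProductSpace ℝ E] (a : E) (x : E) : E :=
  x - pairR x a • a

/-- A reduced irreducible crystallographic root system in a real inner product
space `E`, whose set of simple roots `simple : ι → E` is a basis of `E`. -/
structure RootSystemCtx (ι E : Type) [Fintype ι] [DecidableEq ι]
    [NormedAddCommGroup E] [InnerProductSpace ℝ E] : Type where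
  Roots : Set E
  simple : ι → E
  simple_mem : ∀ i, simple i ∈ Roots
  finite : Roots.Finite
  ne_zero : ∀ a ∈ Roots, a ≠ 0
  reduced : ∀ a ∈ Roots, ∀ t : ℝ, t • a ∈ Roots → t = 1 ∨ t = -1
  crystal : ∀ a ∈ Roots, ∀ b ∈ Roots, ∃ n : ℤ, pairR a b = (n : ℝ)
  refl_stable : ∀ a ∈ Roots, ∀ b ∈ Roots, reflFun b a ∈ Roots
  indep : LinearIndependent ℝ simple
  span_top : Submodule.span ℝ (Set.range simple) = ⊤
  pos_neg : ∀ a ∈ Roots, (∃ c : ι → ℕ, a = ∑ i, (c i : ℝ) • simple i) ∨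
      (∃ c : ι → ℕ, a = -∑ i, (c i : ℝ) • simple i)
  irred : ∀ R1 R2 : Set E, Roots = R1 ∪ R2 →
      (∀ a ∈ R1, ∀ b ∈ R2, (inner ℝ a b : ℝ) = 0) → R1 = ∅ ∨ R2 = ∅

namespace RootSystemCtx

variable {ι E : Type} [Fintype ι] [DecidableEq ι]
  [NormedAddCommGroup E] [InnerProductSpace ℝ E]
variable (S : RootSystemCtx ι E)

/-- `R` is simply laced: `⟨a, b∨⟩ ∈ {-1, 0, 1}` for roots `b ≠ ± a`. -/
def SimplyLaced : Prop :=
  ∀ a ∈ S.Roots, ∀ b ∈ S.Roots, b ≠ a → b ≠ -a →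
    pairR a b = -1 ∨ pairR a b = 0 ∨ pairR a b = 1

/-- membership in the weight lattice `P(R)`. -/
def IsWeight (x : E) : Prop := ∀ a ∈ S.Roots, ∃ n : ℤ, pairR x a = (n : ℝ)

/-- `x` is dominant: `⟨x, αᵢ∨⟩ ≥ 0` for all simple roots. -/
def IsDominant (x : E) : Prop := ∀ i, 0 ≤ pairR x (S.simple i)

/-- positive roots: roots that are nonnegative combinations of simple roots. -/
def IsPositiveRoot (a : E) : Prop :=
  a ∈ S.Roots ∧ ∃ c : ι → ℕ, a = ∑ i, (c i : ℝ) • S.simple i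

/-- the root lattice `Q(R)`. -/
def rootLattice : AddSubgroup E := AddSubgroup.closure S.Roots

/-- the root lattice `Q(R_J)` of the sub-root system `R_J`. -/
def rootLatticeJ (J : Finset ι) : AddSubgroup E :=
  AddSubgroup.closure (S.simple '' ↑J)

/-- the sub-root system `R_J` determined by the simple roots `α_j`, `j ∈ J`. -/
def RootsJ (J : Finset ι) : Set E :=
  {a | a ∈ S.Roots ∧ a ∈ Submodule.span ℝ (S.simple '' ↑J)}

/-- `x` is `J`-dominant. -/
def IsJDominant (J : Finset ι) (x : E) : Prop := ∀ j ∈ J, 0 ≤ pairR x (S.simple j)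

/-- `x` is `J`-minuscule: `⟨x, a∨⟩ ∈ {-1,0,1}` for all `a ∈ R_J`. -/
def IsJMinuscule (J : Finset ι) (x : E) : Prop :=
  ∀ a ∈ S.RootsJ J, pairR x a = -1 ∨ pairR x a = 0 ∨ pairR x a = 1

/-- the action of a word `[i₁, …, i_t]` of simple reflections:
`s_{i₁} ∘ ⋯ ∘ s_{i_t}`. -/
def wordAct (l : List ι) : E → E :=
  l.foldr (fun i f => reflFun (S.simple i) ∘ f) id

/-- membership in the Weyl group `W` (generated by the simple reflections). -/
def InWeyl (w : E → E) : Prop := ∃ l : List ι, S.wordAct l = w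

/-- the Weyl group orbit `W x`. -/
def weylOrbit (x : E) : Set E := {y | ∃ l : List ι, y = S.wordAct l x}

/-- a word is reduced if no shorter word gives the same Weyl group element. -/
def IsReducedWord (l : List ι) : Prop :=
  ∀ l' : List ι, S.wordAct l' = S.wordAct l → l.length ≤ l'.length

/-- `w ∈ W` is `λ`-minuscule: some (equivalently, any) reduced expression
`w = s_{i₁} ⋯ s_{i_t}` satisfies
`⟨s_{i_{r+1}} ⋯ s_{i_t} λ, α_{i_r}∨⟩ = -1` for all `1 ≤ r ≤ t`. -/
def IsMinusculeFor (lam : E) (w : E → E) : Prop :=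
  ∃ l : List ι, S.wordAct l = w ∧ S.IsReducedWord l ∧
    ∀ r : Fin l.length,
      pairR (S.wordAct (l.drop (r + 1)) lam) (S.simple (l.get r)) = -1

/-- the basis of simple roots. -/
def simpleBasis : Module.Basis ι ℝ E := Module.Basis.mk S.indep S.span_top.ge

/-- `⟨x, ωᵢ⟩`: the pairing with the fundamental coweight `ωᵢ` dual to `αᵢ`,
i.e. the `i`-th coordinate of `x` in the basis of simple roots. -/
def coweightPair (x : E) (i : ι) : ℝ := S.simpleBasis.repr x i

end RootSystemCtx

section Aux

variable {ι E : Type} [Fintype ι] [DecidableEq ι]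
  [NormedAddCommGroup E] [InnerProductSpace ℝ E]

lemma inner_self_root_pos {a : E} (ha : a ≠ 0) : 0 < (inner ℝ a a : ℝ) :=
  lt_of_le_of_ne real_inner_self_nonneg (fun h => ha (inner_self_eq_zero.mp h.symm))

lemma pairR_sub_left (x y a : E) : pairR (x - y) a = pairR x a - pairR y a := by
  simp [pairR, inner_sub_left]; ring

lemma pairR_smul_left (c : ℝ) (x a : E) : pairR (c • x) a = c * pairR x a := by
  simp [pairR, real_inner_smul_left]; ring

lemma pairR_neg_right (x a : E) : pairR x (-a) = -pairR x a := by
  simp [pairR, inner_neg_neg, inner_neg_right]; ring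

lemma pairR_self {a : E} (ha : a ≠ 0) : pairR a a = 2 := by
  have h : (inner ℝ a a : ℝ) ≠ 0 := by
    simpa [real_inner_self_eq_norm_sq] using ha
  rw [pairR, mul_div_assoc, div_self h, mul_one]

lemma reflFun_zero (x : E) : reflFun (0 : E) x = x := by
  simp [reflFun, pairR]

lemma inner_reflFun (a x y : E) : (inner ℝ (reflFun a x) (reflFun a y) : ℝ) = inner ℝ x y := by
  by_cases ha : a = 0
  · simp [ha, reflFun_zero]
  · have h : (inner ℝ a a : ℝ) ≠ 0 := by simpa [real_inner_self_eq_norm_sq] using ha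
    simp only [reflFun, pairR, inner_sub_left, inner_sub_right, real_inner_smul_left,
      real_inner_smul_right]
    rw [real_inner_comm a x, real_inner_comm a y]
    field_simp
    ring

lemma pairR_reflFun (a x y : E) : pairR (reflFun a x) (reflFun a y) = pairR x y := by
  unfold pairR; rw [inner_reflFun, inner_reflFun]

lemma reflFun_involutive (a : E) : Function.Involutive (reflFun a) := by
  intro x
  by_cases ha : a = 0
  · simp [ha, reflFun_zero]
  · have h2 : pairR a a = 2 := pairR_self ha
    simp only [reflFun, pairR_sub_left, pairR_smul_left, h2]
    module

lemma pairR_reflFun_right (a x y : E) : pairR x (reflFun a y) = pairR (reflFun a x) y := by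
  conv_rhs => rw [← reflFun_involutive a y]
  rw [pairR_reflFun]

lemma pairR_reflFun_left (a x y : E) : pairR (reflFun a x) y = pairR x (reflFun a y) :=
  (pairR_reflFun_right a x y).symm

lemma reflFun_self {a : E} (ha : a ≠ 0) : reflFun a a = -a := by
  simp [reflFun, pairR_self ha]; module

variable (S : RootSystemCtx ι E)

lemma simple_ne_zero (i : ι) : S.simple i ≠ 0 := S.ne_zero _ (S.simple_mem i)

lemma simpleBasis_apply (i : ι) : S.simpleBasis i = S.simple i := Module.Basis.mk_apply _ _ _

lemma repr_sum_coeff (c : ι → ℝ) (j : ι) :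
    S.simpleBasis.repr (∑ i, c i • S.simple i) j = c j := by
  have h : (∑ i, c i • S.simple i) = ∑ i, c i • S.simpleBasis i := by
    simp [simpleBasis_apply]
  rw [h]
  exact congrFun (S.simpleBasis.repr_sum_self c) j

lemma isPositiveRoot_simple (i : ι) : S.IsPositiveRoot (S.simple i) := by
  refine ⟨S.simple_mem i, fun j => if j = i then 1 else 0, ?_⟩
  simp [apply_ite (Nat.cast : ℕ → ℝ), ite_smul]

lemma repr_simple (i j : ι) :
    S.simpleBasis.repr (S.simple i) j = if i = j then 1 else 0 := by
  rw [← simpleBasis_apply, S.simpleBasis.repr_self]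
  simp [Finsupp.single_apply]

lemma neg_simple_not_pos (i : ι) : ¬ S.IsPositiveRoot (-S.simple i) := by
  rintro ⟨-, c, hc⟩
  have h1 : S.simpleBasis.repr (-S.simple i) i = -1 := by
    have h0 := repr_simple S i i
    simp only [map_neg, Finsupp.coe_neg, Pi.neg_apply, h0]
    simp
  rw [hc, repr_sum_coeff] at h1
  have : (0:ℝ) ≤ (c i : ℝ) := by positivity
  linarith

lemma pos_or_neg_pos {a : E} (ha : a ∈ S.Roots) :
    S.IsPositiveRoot a ∨ S.IsPositiveRoot (-a) := by
  have hna : -a ∈ S.Roots := by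
    have := S.refl_stable a ha a ha
    rwa [reflFun_self (S.ne_zero a ha)] at this
  rcases S.pos_neg a ha with ⟨c, hc⟩ | ⟨c, hc⟩
  · exact Or.inl ⟨ha, c, hc⟩
  · exact Or.inr ⟨hna, c, by rw [hc]; simp⟩

lemma dominant_pairR_nonneg {x : E} (hx : S.IsDominant x) {a : E}
    (ha : S.IsPositiveRoot a) : 0 ≤ pairR x a := by
  obtain ⟨haR, c, hc⟩ := ha
  have hinner : 0 ≤ (inner ℝ x a : ℝ) := by
    rw [hc, inner_sum]
    refine Finset.sum_nonneg fun i _ => ?_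
    rw [real_inner_smul_right]
    have hpos : 0 < (inner ℝ (S.simple i) (S.simple i) : ℝ) :=
      inner_self_root_pos (simple_ne_zero S i)
    have := hx i
    have hxi : 0 ≤ (inner ℝ x (S.simple i) : ℝ) := by
      by_contra hneg
      push_neg at hneg
      have : pairR x (S.simple i) < 0 := by
        unfold pairR
        apply div_neg_of_neg_of_pos <;> nlinarith
      linarith
    positivity
  have haa : 0 < (inner ℝ a a : ℝ) := inner_self_root_pos (S.ne_zero a haR)
  unfold pairR
  positivity

/-- Reflection in a simple root permutes the positive roots other than that simple root. -/
lemma reflFun_simple_pos {i : ι} {b : E} (hb : S.IsPositiveRoot b)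
    (hne : b ≠ S.simple i) :
    S.IsPositiveRoot (reflFun (S.simple i) b) ∧ reflFun (S.simple i) b ≠ S.simple i := by
  obtain ⟨hbR, c, hc⟩ := hb
  have hmem : reflFun (S.simple i) b ∈ S.Roots :=
    S.refl_stable b hbR (S.simple i) (S.simple_mem i)
  -- find j ≠ i with c j ≠ 0
  have hj : ∃ j, j ≠ i ∧ c j ≠ 0 := by
    by_contra h
    push_neg at h
    have hb' : b = (c i : ℝ) • S.simple i := by
      rw [hc, Finset.sum_eq_single i]
      · intro j _ hji
        rw [h j hji]; simp
      · intro hi; exact absurd (Finset.mem_univ i) hi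
    have := S.reduced (S.simple i) (S.simple_mem i) (c i) (by rw [← hb']; exact hbR)
    rcases this with h1 | h1
    · exact hne (by rw [hb', h1, one_smul])
    · have : (0:ℝ) ≤ (c i : ℝ) := by positivity
      rw [h1] at this; linarith
  obtain ⟨j, hji, hcj⟩ := hj
  have hreprj : S.simpleBasis.repr (reflFun (S.simple i) b) j = (c j : ℝ) := by
    unfold reflFun
    have h1 : S.simpleBasis.repr b j = (c j : ℝ) := by rw [hc, repr_sum_coeff]
    have h2 := repr_simple S i j
    simp only [map_sub, map_smul, Finsupp.coe_sub, Pi.sub_apply, Finsupp.coe_smul,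
      Pi.smul_apply, h1, h2, if_neg (fun h : i = j => hji h.symm), smul_eq_mul]
    ring
  have hcjpos : (0:ℝ) < (c j : ℝ) := by
    exact_mod_cast Nat.pos_of_ne_zero hcj
  have hpos : S.IsPositiveRoot (reflFun (S.simple i) b) := by
    rcases S.pos_neg _ hmem with ⟨d, hd⟩ | ⟨d, hd⟩
    · exact ⟨hmem, d, hd⟩
    · exfalso
      have : S.simpleBasis.repr (reflFun (S.simple i) b) j = -(d j : ℝ) := by
        rw [hd]
        have h0 := repr_sum_coeff S (fun i => ((d i : ℝ))) j
        simp only [map_neg, Finsupp.coe_neg, Pi.neg_apply, h0]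
      rw [hreprj] at this
      have : (0:ℝ) ≤ (d j : ℝ) := by positivity
      linarith
  refine ⟨hpos, fun h => ?_⟩
  have hb2 : b = -S.simple i := by
    have h2 := congrArg (reflFun (S.simple i)) h
    rw [reflFun_involutive (S.simple i) b, reflFun_self (simple_ne_zero S i)] at h2
    exact h2
  exact neg_simple_not_pos S i (hb2 ▸ (⟨hbR, c, hc⟩ : S.IsPositiveRoot b))

/-- those positive roots that pair negatively with `x`. -/
def negSet (x : E) : Set E := {a | S.IsPositiveRoot a ∧ pairR x a < 0}

lemma negSet_finite (x : E) : (negSet S x).Finite :=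
  S.finite.subset (fun a ha => ha.1.1)

/-- the number of positive roots pairing negatively with `x`. -/
def negCount (x : E) : ℕ := (negSet S x).ncard

lemma negSet_diff_eq (i : ι) (x : E) :
    negSet S (reflFun (S.simple i) x) \ {S.simple i}
      = reflFun (S.simple i) '' (negSet S x \ {S.simple i}) := by
  ext a
  constructor
  · rintro ⟨⟨hapos, haneg⟩, hane⟩
    simp only [Set.mem_singleton_iff] at hane
    refine ⟨reflFun (S.simple i) a, ⟨⟨?_, ?_⟩, ?_⟩, reflFun_involutive _ a⟩
    · exact (reflFun_simple_pos S hapos hane).1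
    · rw [pairR_reflFun_right]
      exact haneg
    · exact (reflFun_simple_pos S hapos hane).2
  · rintro ⟨b, ⟨⟨hbpos, hbneg⟩, hbne⟩, rfl⟩
    simp only [Set.mem_singleton_iff] at hbne
    refine ⟨⟨(reflFun_simple_pos S hbpos hbne).1, ?_⟩, (reflFun_simple_pos S hbpos hbne).2⟩
    rwa [pairR_reflFun]

lemma negCount_reflFun_le (i : ι) (x : E) :
    negCount S x ≤ negCount S (reflFun (S.simple i) x) + 1 := by
  have key : (negSet S x \ {S.simple i}).ncard
      = (negSet S (reflFun (S.simple i) x) \ {S.simple i}).ncard := by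
    have h := negSet_diff_eq S i (reflFun (S.simple i) x)
    rw [reflFun_involutive (S.simple i) x] at h
    rw [h, Set.ncard_image_of_injective _ (reflFun_involutive (S.simple i)).injective]
  have h1 : negCount S x ≤ (negSet S x \ {S.simple i}).ncard + 1 := by
    have hsub : negSet S x ⊆ insert (S.simple i) (negSet S x \ {S.simple i}) := by
      intro a ha
      by_cases h : a = S.simple i
      · exact h ▸ Set.mem_insert _ _
      · exact Set.mem_insert_of_mem _ ⟨ha, h⟩
    calc negCount S x ≤ (insert (S.simple i) (negSet S x \ {S.simple i})).ncard :=
          Set.ncard_le_ncard hsub (((negSet_finite S x).diff).insert _)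
      _ ≤ (negSet S x \ {S.simple i}).ncard + 1 := Set.ncard_insert_le _ _
  have h2 : (negSet S (reflFun (S.simple i) x) \ {S.simple i}).ncard
      ≤ negCount S (reflFun (S.simple i) x) :=
    Set.ncard_le_ncard Set.diff_subset (negSet_finite S _)
  omega

lemma negCount_reflFun_lt {i : ι} {x : E} (hneg : pairR x (S.simple i) < 0) :
    negCount S (reflFun (S.simple i) x) < negCount S x := by
  have hmem : S.simple i ∈ negSet S x := ⟨isPositiveRoot_simple S i, hneg⟩
  have hnmem : S.simple i ∉ negSet S (reflFun (S.simple i) x) := by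
    rintro ⟨-, h⟩
    rw [pairR_reflFun_left, reflFun_self (simple_ne_zero S i), pairR_neg_right] at h
    linarith
  have h0 : negSet S (reflFun (S.simple i) x) \ {S.simple i}
      = negSet S (reflFun (S.simple i) x) := by
    apply Set.diff_singleton_eq_self hnmem
  calc negCount S (reflFun (S.simple i) x)
      = (negSet S (reflFun (S.simple i) x) \ {S.simple i}).ncard := by
        rw [h0]; rfl
    _ = (negSet S x \ {S.simple i}).ncard := by
        rw [negSet_diff_eq, Set.ncard_image_of_injective _
          (reflFun_involutive (S.simple i)).injective]
    _ < negCount S x :=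
        Set.ncard_lt_ncard (Set.sdiff_singleton_ssubset.mpr hmem) (negSet_finite S x)

lemma negCount_eq_zero_of_dominant {x : E} (hx : S.IsDominant x) : negCount S x = 0 := by
  have : negSet S x = ∅ := by
    ext a
    simp only [Set.mem_empty_iff_false, iff_false]
    rintro ⟨hpos, hneg⟩
    exact absurd (dominant_pairR_nonneg S hx hpos) (not_le.mpr hneg)
  rw [negCount, this, Set.ncard_empty]

/-- all pairings with positive roots are `≥ -1`. -/
def Hm (x : E) : Prop := ∀ a, S.IsPositiveRoot a → -1 ≤ pairR x a

lemma isWeight_reflFun (i : ι) {x : E} (h : S.IsWeight x) :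
    S.IsWeight (reflFun (S.simple i) x) := by
  intro a ha
  rw [← pairR_reflFun_right]
  exact h _ (S.refl_stable a ha (S.simple i) (S.simple_mem i))

lemma hm_reflFun (i : ι) {x : E} (hx : Hm S x) (hpair : pairR x (S.simple i) = -1) :
    Hm S (reflFun (S.simple i) x) := by
  intro a ha
  by_cases h : a = S.simple i
  · subst h
    rw [pairR_reflFun_left, reflFun_self (simple_ne_zero S i), pairR_neg_right, hpair]
    norm_num
  · rw [pairR_reflFun_left]
    exact hx _ (reflFun_simple_pos S ha h).1

lemma hm_of_reflFun (i : ι) {x : E} (hx : Hm S (reflFun (S.simple i) x))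
    (hpair : pairR x (S.simple i) = -1) : Hm S x := by
  intro a ha
  by_cases h : a = S.simple i
  · subst h; rw [hpair]
  · rw [← pairR_reflFun (S.simple i) x a]
    exact hx _ (reflFun_simple_pos S ha h).1

/-- the chain condition for minuscule words, as a recursive predicate. -/
def chainP : List ι → E → Prop
  | [], _ => True
  | i :: l, x => pairR (S.wordAct l x) (S.simple i) = -1 ∧ chainP l x

lemma wordAct_nil : S.wordAct ([] : List ι) = id := rfl

lemma wordAct_cons (i : ι) (l : List ι) :
    S.wordAct (i :: l) = reflFun (S.simple i) ∘ S.wordAct l := rfl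

lemma wordAct_singleton (i : ι) : S.wordAct [i] = reflFun (S.simple i) :=
  funext fun _ => rfl

lemma wordAct_append (l₁ l₂ : List ι) :
    S.wordAct (l₁ ++ l₂) = S.wordAct l₁ ∘ S.wordAct l₂ := by
  induction l₁ with
  | nil => rfl
  | cons i l ih => simp [wordAct_cons, ih, Function.comp_assoc]

lemma chainP_append_singleton (l : List ι) (i : ι) (x : E) :
    chainP S (l ++ [i]) x ↔
      (chainP S l (reflFun (S.simple i) x) ∧ pairR x (S.simple i) = -1) := by
  induction l with
  | nil =>
    simp only [List.nil_append, chainP, wordAct_nil, id]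
    tauto
  | cons j l ih =>
    have h1 : S.wordAct (l ++ [i]) x = S.wordAct l (reflFun (S.simple i) x) := by
      rw [wordAct_append, wordAct_singleton]; rfl
    simp only [List.cons_append, chainP, List.append_eq, ih, h1]
    tauto

lemma chainP_iff_fin (l : List ι) (x : E) :
    chainP S l x ↔ ∀ r : Fin l.length,
      pairR (S.wordAct (l.drop (r + 1)) x) (S.simple (l.get r)) = -1 := by
  induction l with
  | nil =>
    simp only [chainP, List.length_nil, true_iff]
    exact fun r => r.elim0
  | cons i l ih =>
    rw [chainP, ih]
    simp only [List.length_cons]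
    constructor
    · rintro ⟨h0, hrest⟩ r
      refine Fin.cases ?_ (fun r' => ?_) r
      · simpa using h0
      · simpa using hrest r'
    · intro h
      refine ⟨by simpa using h 0, fun r' => by simpa using h r'.succ⟩

lemma hm_pullback (l : List ι) (x : E) (hc : chainP S l x)
    (hd : Hm S (S.wordAct l x)) : Hm S x := by
  induction l with
  | nil => exact hd
  | cons i l ih =>
    obtain ⟨h0, hrest⟩ := hc
    rw [wordAct_cons] at hd
    exact ih hrest (hm_of_reflFun S i hd h0)

lemma hm_of_dominant {x : E} (hx : S.IsDominant x) : Hm S x := by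
  intro a ha
  linarith [dominant_pairR_nonneg S hx ha]

lemma negCount_wordAct_le (l : List ι) (x : E) :
    negCount S x ≤ negCount S (S.wordAct l x) + l.length := by
  induction l with
  | nil => simp [wordAct_nil]
  | cons i l ih =>
    rw [wordAct_cons]
    calc negCount S x ≤ negCount S (S.wordAct l x) + l.length := ih
      _ ≤ (negCount S (reflFun (S.simple i) (S.wordAct l x)) + 1) + l.length := by
          have := negCount_reflFun_le S i (S.wordAct l x)
          omega
      _ = negCount S ((reflFun (S.simple i) ∘ S.wordAct l) x) + (i :: l).length := by
          simp; omega

/-- The key construction: from any weight satisfying `Hm`, a minuscule chain to a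
dominant weight. -/
lemma construct : ∀ (k : ℕ) (x : E), negCount S x = k → S.IsWeight x → Hm S x →
    ∃ l : List ι, chainP S l x ∧ S.IsDominant (S.wordAct l x) ∧
      l.length = negCount S x := by
  intro k
  induction k using Nat.strong_induction_on with
  | _ k ihk =>
    intro x hk hw hm
    by_cases hdom : S.IsDominant x
    · exact ⟨[], trivial, hdom, by rw [negCount_eq_zero_of_dominant S hdom]; rfl⟩
    · have : ∃ i, pairR x (S.simple i) < 0 := by
        by_contra h
        push_neg at h
        exact hdom h
      obtain ⟨i, hi⟩ := this
      have hpair : pairR x (S.simple i) = -1 := by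
        obtain ⟨n, hn⟩ := hw (S.simple i) (S.simple_mem i)
        have hge := hm (S.simple i) (isPositiveRoot_simple S i)
        rw [hn] at hi hge
        have h1 : n < 0 := by exact_mod_cast hi
        have h2 : (-1:ℤ) ≤ n := by exact_mod_cast hge
        have h3 : n = -1 := by omega
        rw [hn, h3]; norm_num
      set x' := reflFun (S.simple i) x with hx'
      have hlt : negCount S x' < k := hk ▸ negCount_reflFun_lt S hi
      obtain ⟨l', hc', hd', hl'⟩ := ihk (negCount S x') hlt x' rfl
        (isWeight_reflFun S i hw) (hm_reflFun S i hm hpair)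
      refine ⟨l' ++ [i], ?_, ?_, ?_⟩
      · rw [chainP_append_singleton]
        exact ⟨hc', hpair⟩
      · rw [wordAct_append]
        have : S.wordAct [i] x = x' := rfl
        simpa [this] using hd'
      · have h1 := negCount_reflFun_lt S hi
        have h2 := negCount_reflFun_le S i x
        rw [← hx'] at h1 h2
        rw [List.length_append, hl']
        simp only [List.length_singleton]
        omega

end Aux

/-- Proposition of [GS], simply-laced case. Let `λ ∈ P(R)`.
There exists `w ∈ W` with `w(λ)` dominant and `w` `λ`-minuscule if and only if
`⟨λ, α∨⟩ ≥ -1` for all positive roots `α` of `R`. -/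
theorem exists_minuscule_dominating_iff
    {ι E : Type} [Fintype ι] [DecidableEq ι]
    [NormedAddCommGroup E] [InnerProductSpace ℝ E]
    (S : RootSystemCtx ι E) (hSL : S.SimplyLaced)
    (lam : E) (hlam : S.IsWeight lam) :
    (∃ w : E → E, S.IsMinusculeFor lam w ∧ S.IsDominant (w lam)) ↔
      ∀ a : E, S.IsPositiveRoot a → -1 ≤ pairR lam a := by
  constructor
  · rintro ⟨w, ⟨l, hlw, -, hchain⟩, hdom⟩
    have hc : chainP S l lam := (chainP_iff_fin S l lam).mpr hchain
    rw [← hlw] at hdom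
    exact hm_pullback S l lam hc (hm_of_dominant S hdom)
  · intro h
    obtain ⟨l, hc, hd, hlen⟩ := construct S (negCount S lam) lam rfl hlam h
    refine ⟨S.wordAct l, ⟨l, rfl, ?_, (chainP_iff_fin S l lam).mp hc⟩, hd⟩
    intro l' hl'
    have h1 := negCount_wordAct_le S l' lam
    have h2 : S.wordAct l' lam = S.wordAct l lam := congrFun hl' lam
    rw [h2, negCount_eq_zero_of_dominant S hd] at h1
    omega
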